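/- Let Q be an integral commutative quantale, P a prime ideal, and P₁, ..., Pₙ primary ideals each with radical equal to P. Then the intersection P₁ ∩ ⋯ ∩ Pₙ is a primary ideal with radical P. -/
import Mathlib


class ICQuantale (Q : Type*) extends CompleteLattice Q, Mul Q where
  mul_assoc : ∀ x y z : Q, x * y * z = x * (y * z)
  mul_comm : ∀ x y : Q, x * y = y * x
  mul_sSup : ∀ (x : Q) (s : Set Q), x * sSup s = ⨆ y ∈ s, x * y
  mul_top : ∀ x : Q, x * ⊤ = x

variable {Q : Type*} [ICQuantale Q]

def qpow (x : Q) : ℕ → Q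
  | 0 => ⊤
  | n+1 => qpow x n * x

def IsIdeal (I : Set Q) : Prop :=
  I.Nonempty ∧ (∀ x ∈ I, ∀ y ∈ I, x ⊔ y ∈ I) ∧ (∀ x ∈ I, ∀ l, l ≤ x → l ∈ I)

def res (I J : Set Q) : Set Q := {x | ∀ j ∈ J, x * j ∈ I}

def prodIdeal (I J : Set Q) : Set Q :=
  {l | ∃ F : Finset (Q × Q), (∀ p ∈ F, p.1 ∈ I ∧ p.2 ∈ J) ∧ l ≤ F.sup (fun p => p.1 * p.2)}

def rad (I : Set Q) : Set Q := {x | ∃ n, 1 ≤ n ∧ qpow x n ∈ I}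

def IsPrimeIdeal (P : Set Q) : Prop :=
  IsIdeal P ∧ P ≠ Set.univ ∧ ∀ x y : Q, x * y ∈ P → x ∈ P ∨ y ∈ P

def IsPrimaryIdeal (I : Set Q) : Prop :=
  IsIdeal I ∧ I ≠ Set.univ ∧ ∀ x y : Q, x * y ∈ I → x ∈ I ∨ ∃ n, 1 ≤ n ∧ qpow y n ∈ I

def MultClosed (S : Set Q) : Prop := ⊤ ∈ S ∧ ∀ x ∈ S, ∀ y ∈ S, x * y ∈ S

def ann (S : Set Q) : Set Q := {x | ∀ s ∈ S, x * s = ⊥}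

lemma icq_mul_le_mul_left (x : Q) {y z : Q} (h : y ≤ z) : x * y ≤ x * z := by
  have hs : sSup ({y, z} : Set Q) = z := by
    rw [sSup_pair]; exact sup_eq_right.mpr h
  have := ICQuantale.mul_sSup x ({y, z} : Set Q)
  rw [hs] at this
  rw [this]
  exact le_iSup₂_of_le y (by simp) le_rfl

lemma mul_le_left (x y : Q) : x * y ≤ x := by
  calc x * y ≤ x * ⊤ := icq_mul_le_mul_left x le_top
  _ = x := ICQuantale.mul_top x

lemma qpow_anti (x : Q) {m n : ℕ} (h : m ≤ n) : qpow x n ≤ qpow x m := by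
  induction n with
  | zero => simp_all [qpow]
  | succ k ih =>
    rcases Nat.lt_or_ge m (k+1) with hm | hm
    · exact le_trans (mul_le_left _ _) (ih (Nat.lt_succ_iff.mp hm))
    · have : m = k + 1 := le_antisymm h hm
      subst this; exact le_rfl

lemma bot_mem_of_ideal {I : Set Q} (hI : IsIdeal I) : ⊥ ∈ I := by
  obtain ⟨⟨a, ha⟩, _, hdown⟩ := hI
  exact hdown a ha ⊥ bot_le

theorem stmt17 {ι : Type*} [Fintype ι] [Nonempty ι] {P : Set Q} (hP : IsPrimeIdeal P)
    {f : ι → Set Q} (hf : ∀ i, IsPrimaryIdeal (f i) ∧ rad (f i) = P) :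
    IsPrimaryIdeal (⋂ i, f i) ∧ rad (⋂ i, f i) = P := by
  classical
  set I : Set Q := ⋂ i, f i with hIdef
  have hmem : ∀ x, x ∈ I ↔ ∀ i, x ∈ f i := by intro x; simp [hIdef]
  have hideal : IsIdeal I := by
    refine ⟨⟨⊥, (hmem ⊥).mpr fun i => bot_mem_of_ideal (hf i).1.1⟩, ?_, ?_⟩
    · intro x hx y hy
      exact (hmem _).mpr fun i => (hf i).1.1.2.1 x ((hmem x).mp hx i) y ((hmem y).mp hy i)
    · intro x hx l hl
      exact (hmem _).mpr fun i => (hf i).1.1.2.2 x ((hmem x).mp hx i) l hl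
  obtain ⟨i₀⟩ := ‹Nonempty ι›
  have hproper : I ≠ Set.univ := by
    intro h
    apply (hf i₀).1.2.1
    apply Set.eq_univ_of_univ_subset
    rw [← h]
    exact Set.iInter_subset f i₀
  -- common power lemma: if x ∈ P then ∃ n ≥ 1, qpow x n ∈ I
  have hpow : ∀ x : Q, x ∈ P → ∃ n, 1 ≤ n ∧ qpow x n ∈ I := by
    intro x hx
    have hn : ∀ i, ∃ n, 1 ≤ n ∧ qpow x n ∈ f i := by
      intro i
      have : x ∈ rad (f i) := by rw [(hf i).2]; exact hx
      exact this
    choose g hg1 hg2 using hn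
    refine ⟨1 + Finset.univ.sup g, by omega, (hmem _).mpr fun i => ?_⟩
    apply (hf i).1.1.2.2 _ (hg2 i)
    apply qpow_anti
    have := Finset.le_sup (f := g) (Finset.mem_univ i)
    omega
  have hrad : rad I = P := by
    apply Set.Subset.antisymm
    · intro x ⟨n, hn1, hnI⟩
      rw [← (hf i₀).2]
      exact ⟨n, hn1, (hmem _).mp hnI i₀⟩
    · intro x hx
      exact hpow x hx
  refine ⟨⟨hideal, hproper, ?_⟩, hrad⟩
  intro x y hxy
  by_cases hxI : x ∈ I
  · exact Or.inl hxI
  · right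
    obtain ⟨j, hj⟩ : ∃ j, x ∉ f j := by
      by_contra h
      push_neg at h
      exact hxI ((hmem x).mpr h)
    have hyP : y ∈ P := by
      rcases (hf j).1.2.2 x y ((hmem _).mp hxy j) with h | h
      · exact absurd h hj
      · rw [← (hf j).2]; exact h
    exact hpow y hyP
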